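/- Let A be a discrete valuation ring with residue field k, and let L• be a bounded complex of finite free A-modules concentrated in degrees [0, m] with m ≥ 1. Then there exists an acyclic subcomplex N• of L•, concentrated in degrees m-1 and m, with N^{m-1} and N^m free direct summands of L^{m-1} and L^m respectively and d^m : N^{m-1} → N^m an isomorphism, such that the quotient complex L'• = L•/N• is again a bounded complex of finite free A-modules, the quotient map L• → L'• is a quasiisomorphism, and L'^m ⊗_A k = H^m(L'• ⊗_A k). -/

import Mathlib

open CategoryTheory

section LinAlg

open Submodule

universe v

lemma dvr_split {A : Type} [CommRing A] [IsDomain A] [IsDiscreteValuationRing A]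
    {M N : Type v} [AddCommGroup M] [Module A M] [AddCommGroup N] [Module A N]
    [Module.Finite A M] [Module.Free A M] [Module.Finite A N] [Module.Free A N]
    (d : M →ₗ[A] N) :
    ∃ (K : Submodule A M) (K' : Submodule A N),
      Submodule.map d K = K' ∧
      (∀ x ∈ K, d x = 0 → x = 0) ∧
      (∃ C, IsCompl K C) ∧ (∃ C', IsCompl K' C') ∧
      Module.Free A K ∧ Module.Free A K' ∧
      Module.Finite A (M ⧸ K) ∧ Module.Free A (M ⧸ K) ∧
      Module.Finite A (N ⧸ K') ∧ Module.Free A (N ⧸ K') ∧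
      LinearMap.range d ≤ K' ⊔ (IsLocalRing.maximalIdeal A) • ⊤ := by
  classical
  obtain ⟨n, snf⟩ := (LinearMap.range d).smithNormalForm (Module.finBasis A N)
  obtain ⟨bM, bR, f, a, hsnf⟩ := snf
  set ι := {i : Fin n // IsUnit (a i)} with hι
  have hxv : ∀ i : ι, ∃ x : M, d x = (bR i.1 : N) := fun i =>
    LinearMap.mem_range.mp (bR i.1).2
  choose xv hxv using hxv
  set K : Submodule A M := span A (Set.range xv) with hK
  set K' : Submodule A N := span A (Set.range fun i : ι => (bR i.1 : N)) with hK'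
  have hmap : Submodule.map d K = K' := by
    rw [hK, Submodule.map_span, ← Set.range_comp]
    exact congrArg (span A) (congrArg Set.range (funext fun i => hxv i))
  have hinj : ∀ x ∈ K, d x = 0 → x = 0 := by
    intro x hx hdx
    obtain ⟨c, rfl⟩ := (mem_span_range_iff_exists_fun A).mp hx
    have h0 : (∑ i : ι, c i • bR i.1) = 0 := by
      apply Subtype.ext
      push_cast
      rw [← hdx]
      simp [map_sum, hxv]
    have hli : LinearIndependent A (fun i : ι => bR i.1) :=
      bR.linearIndependent.comp _ Subtype.val_injective
    have hc : ∀ i, c i = 0 := Fintype.linearIndependent_iff.mp hli c h0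
    simp [hc]
  -- the restricted equivalence
  have hdK : ∀ x ∈ K, d x ∈ K' := fun x hx => hmap ▸ Submodule.mem_map_of_mem hx
  set dK : K →ₗ[A] K' := d.restrict hdK with hdKdef
  have hbij : Function.Bijective dK := by
    constructor
    · intro x y hxy
      have h2 : d (x : M) = d (y : M) := congrArg Subtype.val hxy
      have : d (x - y : M) = 0 := by rw [map_sub, h2, sub_self]
      have := hinj _ (sub_mem x.2 y.2) this
      exact Subtype.ext (by rwa [sub_eq_zero] at this)
    · intro y
      have : (y : N) ∈ Submodule.map d K := hmap.symm ▸ y.2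
      obtain ⟨x, hx, hdx⟩ := this
      exact ⟨⟨x, hx⟩, Subtype.ext hdx⟩
  set eK := LinearEquiv.ofBijective dK hbij with heK
  -- projection onto K'
  have hgen : ∀ i : ι, (bR i.1 : N) ∈ K' := fun i => subset_span ⟨i, rfl⟩
  set gen : ι → K' := fun i => ⟨bR i.1, hgen i⟩ with hgendef
  set q : N →ₗ[A] K' :=
    ∑ i : ι, (bM.coord (f i.1)).smulRight ((((i.2.unit⁻¹ : Aˣ) : A)) • gen i) with hq
  have hqgen : ∀ j : ι, q (bR j.1 : N) = gen j := by
    intro j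
    rw [hq]
    simp only [LinearMap.sum_apply, LinearMap.smulRight_apply, Module.Basis.coord_apply]
    rw [Finset.sum_eq_single j]
    · have : bM.repr (bR j.1 : N) (f j.1) = a j.1 := by
        rw [hsnf j.1]
        simp [Finsupp.single_apply]
      rw [this, smul_smul]
      have h1 : a j.1 * ((j.2.unit⁻¹ : Aˣ) : A) = 1 := IsUnit.mul_val_inv j.2
      rw [h1, one_smul]
    · intro i _ hij
      have : bM.repr (bR j.1 : N) (f i.1) = 0 := by
        rw [hsnf j.1]
        have hfij : f j.1 ≠ f i.1 := by
          intro h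
          exact hij (Subtype.ext (f.injective h)).symm
        simp [Finsupp.single_apply, hfij]
      rw [this]
      simp
    · intro h
      exact absurd (Finset.mem_univ j) h
  have hqK' : ∀ x : K', q (x : N) = x := by
    intro x
    obtain ⟨x, hx⟩ := x
    refine Subtype.ext ?_
    have : ∀ y ∈ K', ((q y : K') : N) = y := by
      intro y hy
      induction hy using Submodule.span_induction with
      | mem y hy =>
        obtain ⟨i, rfl⟩ := hy
        rw [hqgen i]
      | zero => simp
      | add y z _ _ hy hz => simp [map_add, hy, hz]
      | smul c y _ hy => simp [map_smul, hy]
    exact this x hx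
  have hcomplK' : IsCompl K' (LinearMap.ker q) := LinearMap.isCompl_of_proj hqK'
  -- projection onto K
  set p : M →ₗ[A] K := (eK.symm : K' →ₗ[A] K).comp (q.comp d) with hp
  have hpK : ∀ x : K, p (x : M) = x := by
    intro x
    rw [hp]
    simp only [LinearMap.coe_comp, Function.comp_apply, LinearEquiv.coe_coe]
    have h1 : d (x : M) = (dK x : N) := rfl
    rw [h1, hqK' (dK x)]
    exact eK.symm_apply_eq.mpr rfl
  have hcomplK : IsCompl K (LinearMap.ker p) := LinearMap.isCompl_of_proj hpK
  -- freeness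
  have hfreeK : Module.Free A K :=
    Module.Free.of_basis (Submodule.basisOfPid (Module.finBasis A M) K).2
  have hfreeK' : Module.Free A K' :=
    Module.Free.of_basis (Submodule.basisOfPid (Module.finBasis A N) K').2
  have hfreeQM : Module.Free A (M ⧸ K) :=
    Module.Free.of_equiv'
      (Module.Free.of_basis (Submodule.basisOfPid (Module.finBasis A M) (LinearMap.ker p)).2)
      (Submodule.quotientEquivOfIsCompl K (LinearMap.ker p) hcomplK).symm
  have hfreeQN : Module.Free A (N ⧸ K') :=
    Module.Free.of_equiv'
      (Module.Free.of_basis (Submodule.basisOfPid (Module.finBasis A N) (LinearMap.ker q)).2)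
      (Submodule.quotientEquivOfIsCompl K' (LinearMap.ker q) hcomplK').symm
  have hfinQM : Module.Finite A (M ⧸ K) := Module.Finite.of_surjective K.mkQ (mkQ_surjective K)
  have hfinQN : Module.Finite A (N ⧸ K') := Module.Finite.of_surjective K'.mkQ (mkQ_surjective K')
  refine ⟨K, K', hmap, hinj, ⟨_, hcomplK⟩, ⟨_, hcomplK'⟩, hfreeK, hfreeK', hfinQM, hfreeQM,
    hfinQN, hfreeQN, ?_⟩
  -- the range condition
  rintro z ⟨w, rfl⟩
  set v : LinearMap.range d := ⟨d w, LinearMap.mem_range_self d w⟩ with hv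
  have hrepr : d w = ∑ i : Fin n, bR.repr v i • (a i • bM (f i)) := by
    have : ((∑ i : Fin n, bR.repr v i • bR i : LinearMap.range d) : N) = d w := by
      rw [bR.sum_repr v]
    rw [← this]
    push_cast
    exact Finset.sum_congr rfl fun i _ => by rw [hsnf i]
  rw [hrepr]
  apply Submodule.sum_mem
  intro i _
  by_cases hu : IsUnit (a i)
  · apply Submodule.mem_sup_left
    rw [← hsnf i]
    exact Submodule.smul_mem _ _ (hgen ⟨i, hu⟩)
  · apply Submodule.mem_sup_right
    have hai : a i ∈ IsLocalRing.maximalIdeal A := hu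
    exact Submodule.smul_mem _ _ (Submodule.smul_mem_smul hai Submodule.mem_top)

end LinAlg

section Aux

instance {A : Type} [CommRing A] {X Y : ModuleCat.{v} A} : CoeOut (X ⟶ Y) (X →ₗ[A] Y) :=
  ⟨ModuleCat.Hom.hom⟩

variable {A : Type} [CommRing A] (L : CochainComplex (ModuleCat.{v} A) ℕ) (n : ℕ)

/-- The family of submodules to quotient by. -/
def Ssub (K : Submodule A (L.X n)) (K' : Submodule A (L.X (n+1))) :
    ∀ i, Submodule A (L.X i) := fun i =>
  if h : i = n then h.symm ▸ K else if h' : i = n + 1 then h'.symm ▸ K' else ⊥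

variable (K : Submodule A (L.X n)) (K' : Submodule A (L.X (n+1)))

lemma Ssub_self : Ssub L n K K' n = K := by
  unfold Ssub
  rw [dif_pos rfl]

lemma Ssub_succ : Ssub L n K K' (n+1) = K' := by
  unfold Ssub
  rw [dif_neg (Nat.succ_ne_self n), dif_pos rfl]

lemma Ssub_other (i : ℕ) (h1 : i ≠ n) (h2 : i ≠ n + 1) : Ssub L n K K' i = ⊥ := by
  unfold Ssub
  rw [dif_neg h1, dif_neg h2]

/-- The endomorphism family. -/
def phiAux (φn : L.X n →ₗ[A] L.X n) (φn1 : L.X (n+1) →ₗ[A] L.X (n+1)) :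
    ∀ i, L.X i →ₗ[A] L.X i := fun i =>
  if h : i = n then h.symm ▸ φn else if h' : i = n + 1 then h'.symm ▸ φn1 else 0

variable (φn : L.X n →ₗ[A] L.X n) (φn1 : L.X (n+1) →ₗ[A] L.X (n+1))

lemma phiAux_self : phiAux L n φn φn1 n = φn := by
  unfold phiAux
  rw [dif_pos rfl]

lemma phiAux_succ : phiAux L n φn φn1 (n+1) = φn1 := by
  unfold phiAux
  rw [dif_neg (Nat.succ_ne_self n), dif_pos rfl]

lemma phiAux_other (i : ℕ) (h1 : i ≠ n) (h2 : i ≠ n + 1) : phiAux L n φn φn1 i = 0 := by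
  unfold phiAux
  rw [dif_neg h1, dif_neg h2]

/-- The homotopy family. -/
def hAux (g : L.X (n+1) →ₗ[A] L.X n) : ∀ i j : ℕ, L.X i ⟶ L.X j := fun i j =>
  if h : i = n + 1 ∧ j = n then h.2.symm ▸ h.1.symm ▸ (ModuleCat.ofHom g : L.X (n+1) ⟶ L.X n) else 0

variable (g : L.X (n+1) →ₗ[A] L.X n)

lemma hAux_self : hAux L n g (n+1) n = (ModuleCat.ofHom g : L.X (n+1) ⟶ L.X n) := by
  unfold hAux
  rw [dif_pos ⟨rfl, rfl⟩]

lemma hAux_other (i j : ℕ) (h : ¬ (i = n + 1 ∧ j = n)) : hAux L n g i j = 0 := by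
  unfold hAux
  rw [dif_neg h]

variable (S : ∀ i, Submodule A (L.X i))
  (hS : ∀ i, S i ≤ (S (i+1)).comap (L.d i (i+1) : L.X i →ₗ[A] L.X (i+1)))

/-- The quotient complex. -/
def Lq : CochainComplex (ModuleCat A) ℕ :=
  CochainComplex.of (fun i => ModuleCat.of A (L.X i ⧸ S i))
    (fun i => (ModuleCat.ofHom (Submodule.mapQ (S i) (S (i+1)) (L.d i (i+1) : L.X i →ₗ[A] L.X (i+1)) (hS i)) :
        ModuleCat.of A (L.X i ⧸ S i) ⟶ ModuleCat.of A (L.X (i+1) ⧸ S (i+1))))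
    (fun i => by
      refine ModuleCat.hom_ext <| LinearMap.ext fun x => ?_
      obtain ⟨y, rfl⟩ := Submodule.mkQ_surjective _ x
      show Submodule.mapQ _ _ _ (hS (i+1))
          (Submodule.mapQ _ _ _ (hS i) (Submodule.Quotient.mk y)) = 0
      rw [Submodule.mapQ_apply, Submodule.mapQ_apply]
      have h2 : (L.d (i+1) (i+2) : L.X (i+1) →ₗ[A] L.X (i+2))
          ((L.d i (i+1) : L.X i →ₗ[A] L.X (i+1)) y) = 0 :=
        LinearMap.congr_fun (congrArg ModuleCat.Hom.hom (L.d_comp_d i (i+1) (i+2))) y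
      rw [h2]
      simp)

lemma Lq_X (i : ℕ) : (Lq L S hS).X i = ModuleCat.of A (L.X i ⧸ S i) := rfl

lemma Lq_d (i : ℕ) : (Lq L S hS).d i (i+1) =
    (ModuleCat.ofHom (Submodule.mapQ (S i) (S (i+1)) (L.d i (i+1) : L.X i →ₗ[A] L.X (i+1)) (hS i)) :
      ModuleCat.of A (L.X i ⧸ S i) ⟶ ModuleCat.of A (L.X (i+1) ⧸ S (i+1))) :=
  by simp only [Lq, CochainComplex.of_d]

/-- The quotient chain map. -/
def πq : L ⟶ Lq L S hS where
  f i := (ModuleCat.ofHom (S i).mkQ : L.X i ⟶ (Lq L S hS).X i)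
  comm' i j hij := by
    obtain rfl : i + 1 = j := hij
    rw [Lq_d]
    refine ModuleCat.hom_ext <| LinearMap.ext fun y => ?_
    show Submodule.mapQ (S i) (S (i+1)) _ (hS i) ((S i).mkQ y)
      = (S (i+1)).mkQ ((L.d i (i+1) : L.X i →ₗ[A] L.X (i+1)) y)
    rw [Submodule.mkQ_apply, Submodule.mkQ_apply, Submodule.mapQ_apply]

lemma πq_f (i : ℕ) : (πq L S hS).f i = (ModuleCat.ofHom (S i).mkQ : L.X i ⟶ (Lq L S hS).X i) := rfl

/-- The splitting chain map. -/
def σq (φ : ∀ i, L.X i →ₗ[A] L.X i)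
    (hker : ∀ i, S i ≤ LinearMap.ker (LinearMap.id - φ i))
    (hφd : ∀ i (x : L.X i), (L.d i (i+1) : L.X i →ₗ[A] L.X (i+1)) (φ i x)
      = φ (i+1) ((L.d i (i+1) : L.X i →ₗ[A] L.X (i+1)) x)) :
    Lq L S hS ⟶ L where
  f i := (ModuleCat.ofHom ((S i).liftQ (LinearMap.id - φ i) (hker i)) : (Lq L S hS).X i ⟶ L.X i)
  comm' i j hij := by
    obtain rfl : i + 1 = j := hij
    rw [Lq_d]
    refine ModuleCat.hom_ext <| LinearMap.ext fun x => ?_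
    obtain ⟨y, rfl⟩ := Submodule.mkQ_surjective _ x
    show (L.d i (i+1) : L.X i →ₗ[A] L.X (i+1)) (((S i).liftQ _ (hker i)) ((S i).mkQ y))
      = ((S (i+1)).liftQ _ (hker (i+1)))
          (Submodule.mapQ (S i) (S (i+1)) _ (hS i) ((S i).mkQ y))
    rw [Submodule.mkQ_apply, Submodule.liftQ_apply, Submodule.mapQ_apply,
      Submodule.liftQ_apply]
    simp only [LinearMap.sub_apply, LinearMap.id_apply, map_sub, hφd i y]

end Aux

/-- Minimalization at the top degree: for a bounded complex `L•` of finite free modules over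
a DVR `A` concentrated in degrees `[0, m]`, one can divide out an acyclic subcomplex `N•`
concentrated in degrees `m-1, m` (with `N^{m-1}, N^m` free direct summands and
`d : N^{m-1} ≅ N^m`), so that the quotient map `π : L• → L'•` is a quasiisomorphism onto a
bounded complex of finite free modules whose top differential vanishes modulo the maximal
ideal, i.e. `L'^m ⊗ k = H^m(L'• ⊗ k)`. -/
theorem stmt_16 (A : Type) [CommRing A] [IsDomain A] [IsDiscreteValuationRing A]
    (L : CochainComplex (ModuleCat A) ℕ) (m : ℕ) (hm : 1 ≤ m)
    (hb : ∀ i, m < i → Subsingleton (L.X i))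
    (hfree : ∀ i, Module.Finite A (L.X i) ∧ Module.Free A (L.X i)) :
    ∃ (L' : CochainComplex (ModuleCat A) ℕ) (π : L ⟶ L'),
      (∀ i, Function.Surjective (π.f i)) ∧
      (∀ i, i ≠ m - 1 → i ≠ m → Function.Injective (π.f i)) ∧
      (∃ C, IsCompl (LinearMap.ker (π.f (m - 1) : L.X (m - 1) →ₗ[A] L'.X (m - 1))) C) ∧
      (∃ C, IsCompl (LinearMap.ker (π.f m : L.X m →ₗ[A] L'.X m)) C) ∧
      Module.Free A ↥(LinearMap.ker (π.f (m - 1) : L.X (m - 1) →ₗ[A] L'.X (m - 1))) ∧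
      Module.Free A ↥(LinearMap.ker (π.f m : L.X m →ₗ[A] L'.X m)) ∧
      Submodule.map (L.d (m - 1) m : L.X (m - 1) →ₗ[A] L.X m)
          (LinearMap.ker (π.f (m - 1) : L.X (m - 1) →ₗ[A] L'.X (m - 1)))
        = LinearMap.ker (π.f m : L.X m →ₗ[A] L'.X m) ∧
      (∀ x ∈ LinearMap.ker (π.f (m - 1) : L.X (m - 1) →ₗ[A] L'.X (m - 1)),
        L.d (m - 1) m x = 0 → x = 0) ∧
      (∀ i, Module.Finite A (L'.X i) ∧ Module.Free A (L'.X i)) ∧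
      QuasiIso π ∧
      LinearMap.range (L'.d (m - 1) m : L'.X (m - 1) →ₗ[A] L'.X m)
        ≤ (IsLocalRing.maximalIdeal A) • (⊤ : Submodule A (L'.X m)) := by
  classical
  obtain ⟨n, rfl⟩ : ∃ n, m = n + 1 := ⟨m - 1, (Nat.succ_pred_eq_of_pos hm).symm⟩
  suffices h :
      ∃ (L' : CochainComplex (ModuleCat A) ℕ) (π : L ⟶ L'),
        (∀ i, Function.Surjective (π.f i)) ∧
        (∀ i, i ≠ n → i ≠ n + 1 → Function.Injective (π.f i)) ∧
        (∃ C, IsCompl (LinearMap.ker (π.f n : L.X n →ₗ[A] L'.X n)) C) ∧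
        (∃ C, IsCompl (LinearMap.ker (π.f (n+1) : L.X (n+1) →ₗ[A] L'.X (n+1))) C) ∧
        Module.Free A ↥(LinearMap.ker (π.f n : L.X n →ₗ[A] L'.X n)) ∧
        Module.Free A ↥(LinearMap.ker (π.f (n+1) : L.X (n+1) →ₗ[A] L'.X (n+1))) ∧
        Submodule.map (L.d n (n+1) : L.X n →ₗ[A] L.X (n+1))
            (LinearMap.ker (π.f n : L.X n →ₗ[A] L'.X n))
          = LinearMap.ker (π.f (n+1) : L.X (n+1) →ₗ[A] L'.X (n+1)) ∧
        (∀ x ∈ LinearMap.ker (π.f n : L.X n →ₗ[A] L'.X n),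
          L.d n (n+1) x = 0 → x = 0) ∧
        (∀ i, Module.Finite A (L'.X i) ∧ Module.Free A (L'.X i)) ∧
        QuasiIso π ∧
        LinearMap.range (L'.d n (n+1) : L'.X n →ₗ[A] L'.X (n+1))
          ≤ (IsLocalRing.maximalIdeal A) • (⊤ : Submodule A (L'.X (n+1))) by
    exact h
  haveI hfin_n : Module.Finite A (L.X n) := (hfree n).1
  haveI hfree_n : Module.Free A (L.X n) := (hfree n).2
  haveI hfin_n1 : Module.Finite A (L.X (n+1)) := (hfree (n+1)).1
  haveI hfree_n1 : Module.Free A (L.X (n+1)) := (hfree (n+1)).2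
  haveI hss : Subsingleton (L.X (n+2)) := hb (n+2) (by omega)
  obtain ⟨K, K', hmap, hinjK, ⟨C, hComplK⟩, ⟨C', hComplK'⟩, hfreeK, hfreeK',
    hfinQM, hfreeQM, hfinQN, hfreeQN, hrange⟩ :=
      dvr_split (L.d n (n+1) : L.X n →ₗ[A] L.X (n+1))
  -- iterated differentials vanish
  have hdd : ∀ (i : ℕ) (x : L.X i), (L.d (i+1) (i+2) : L.X (i+1) →ₗ[A] L.X (i+2))
      ((L.d i (i+1) : L.X i →ₗ[A] L.X (i+1)) x) = 0 :=
    fun i x => LinearMap.congr_fun (congrArg ModuleCat.Hom.hom (L.d_comp_d i (i+1) (i+2))) x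
  -- the submodule family works
  have hdS : ∀ i, Ssub L n K K' i ≤
      (Ssub L n K K' (i+1)).comap (L.d i (i+1) : L.X i →ₗ[A] L.X (i+1)) := by
    intro i
    by_cases hi : i = n
    · subst hi
      rw [Ssub_self, Ssub_succ]
      intro x hx
      exact Submodule.mem_comap.mpr (hmap ▸ Submodule.mem_map_of_mem hx)
    · by_cases hi' : i = n + 1
      · subst hi'
        intro x _
        refine Submodule.mem_comap.mpr ?_
        rw [Ssub_other L n K K' (n+2) (by omega) (by omega)]
        exact (Submodule.mem_bot A).mpr (Subsingleton.elim _ _)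
      · rw [Ssub_other L n K K' i hi hi']
        exact bot_le
  -- the correction maps
  obtain ⟨φn, φn1, g, hφn_mem, hφn_id, hφn_van, hφn1_mem, hφn1_id, hcd, hgd, hdg⟩ :
      ∃ (φn : L.X n →ₗ[A] L.X n) (φn1 : L.X (n+1) →ₗ[A] L.X (n+1))
        (g : L.X (n+1) →ₗ[A] L.X n),
        (∀ x, φn x ∈ K) ∧ (∀ x ∈ K, φn x = x) ∧
        (∀ x, (L.d n (n+1) : L.X n →ₗ[A] L.X (n+1)) x = 0 → φn x = 0) ∧
        (∀ x, φn1 x ∈ K') ∧ (∀ x ∈ K', φn1 x = x) ∧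
        (∀ x, (L.d n (n+1) : L.X n →ₗ[A] L.X (n+1)) (φn x)
            = φn1 ((L.d n (n+1) : L.X n →ₗ[A] L.X (n+1)) x)) ∧
        (∀ x, g ((L.d n (n+1) : L.X n →ₗ[A] L.X (n+1)) x) = φn x) ∧
        (∀ y, (L.d n (n+1) : L.X n →ₗ[A] L.X (n+1)) (g y) = φn1 y) := by
    have hdKmem : ∀ x ∈ K, (L.d n (n+1) : L.X n →ₗ[A] L.X (n+1)) x ∈ K' :=
      fun x hx => hmap ▸ Submodule.mem_map_of_mem hx
    set dd := (L.d n (n+1) : L.X n →ₗ[A] L.X (n+1)) with hdd'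
    set dK : K →ₗ[A] K' := dd.restrict hdKmem with hdK
    have hbij : Function.Bijective dK := by
      constructor
      · intro x y hxy
        have h2 : dd (x : L.X n) = dd (y : L.X n) := congrArg Subtype.val hxy
        have h3 : dd ((x : L.X n) - y) = 0 := by rw [map_sub, h2, sub_self]
        have := hinjK _ (sub_mem x.2 y.2) h3
        exact Subtype.ext (by rwa [sub_eq_zero] at this)
      · rintro ⟨y, hy⟩
        have : y ∈ Submodule.map dd K := hmap.symm ▸ hy
        obtain ⟨x, hx, hdx⟩ := this
        exact ⟨⟨x, hx⟩, Subtype.ext hdx⟩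
    set eK : K ≃ₗ[A] K' := LinearEquiv.ofBijective dK hbij with heK
    set pr : L.X (n+1) →ₗ[A] K' := K'.linearProjOfIsCompl C' hComplK' with hpr
    set g : L.X (n+1) →ₗ[A] L.X n := K.subtype ∘ₗ (eK.symm : K' →ₗ[A] K) ∘ₗ pr with hg
    have key1 : ∀ z : K, dd (z : L.X n) = ((dK z : K') : L.X (n+1)) := fun z => rfl
    have key2 : ∀ z : K, dK z = eK z := fun z => rfl
    have keyg : ∀ y, dd (g y) = ((pr y : K') : L.X (n+1)) := by
      intro y
      rw [hg]
      simp only [LinearMap.coe_comp, Function.comp_apply, Submodule.coe_subtype,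
        LinearEquiv.coe_coe]
      rw [key1, key2, LinearEquiv.apply_symm_apply]
    have hprK' : ∀ (y : L.X (n+1)) (hy : y ∈ K'), pr y = ⟨y, hy⟩ := fun y hy =>
      Submodule.linearProjOfIsCompl_apply_left hComplK' ⟨y, hy⟩
    refine ⟨g ∘ₗ dd, K'.subtype ∘ₗ pr, g, ?_, ?_, ?_, ?_, ?_, ?_, ?_, ?_⟩
    · intro x
      simp only [LinearMap.coe_comp, Function.comp_apply, hg, Submodule.coe_subtype]
      exact Submodule.coe_mem _
    · intro x hx
      simp only [LinearMap.coe_comp, Function.comp_apply, hg, Submodule.coe_subtype]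
      rw [key1 ⟨x, hx⟩, hprK' _ (Submodule.coe_mem _)]
      have : (⟨((dK ⟨x, hx⟩ : K') : L.X (n+1)), Submodule.coe_mem _⟩ : K') = eK ⟨x, hx⟩ :=
        Subtype.ext rfl
      rw [this]
      simp
    · intro x hx
      simp only [LinearMap.coe_comp, Function.comp_apply]
      rw [hx, map_zero]
    · intro x
      simp only [LinearMap.coe_comp, Function.comp_apply, Submodule.coe_subtype]
      exact Submodule.coe_mem _
    · intro x hx
      simp only [LinearMap.coe_comp, Function.comp_apply, Submodule.coe_subtype]
      rw [hprK' x hx]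
    · intro x
      simp only [LinearMap.coe_comp, Function.comp_apply, Submodule.coe_subtype]
      rw [keyg]
    · intro x
      rfl
    · intro y
      simp only [LinearMap.coe_comp, Function.comp_apply, Submodule.coe_subtype]
      rw [keyg]
  -- properties of the phi family
  have hφ_mem : ∀ i x, phiAux L n φn φn1 i x ∈ Ssub L n K K' i := by
    intro i x
    by_cases h1 : i = n
    · subst h1
      rw [phiAux_self, Ssub_self]
      exact hφn_mem x
    · by_cases h2 : i = n + 1
      · subst h2
        rw [phiAux_succ, Ssub_succ]
        exact hφn1_mem x
      · rw [phiAux_other L n _ _ i h1 h2, Ssub_other L n K K' i h1 h2]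
        simp
  have hφ_id : ∀ i, ∀ x ∈ Ssub L n K K' i, phiAux L n φn φn1 i x = x := by
    intro i x hx
    by_cases h1 : i = n
    · subst h1
      rw [Ssub_self] at hx
      rw [phiAux_self]
      exact hφn_id x hx
    · by_cases h2 : i = n + 1
      · subst h2
        rw [Ssub_succ] at hx
        rw [phiAux_succ]
        exact hφn1_id x hx
      · rw [Ssub_other L n K K' i h1 h2] at hx
        rw [phiAux_other L n _ _ i h1 h2, (Submodule.mem_bot A).mp hx]
        simp
  have hφd : ∀ i (x : L.X i), (L.d i (i+1) : L.X i →ₗ[A] L.X (i+1)) (phiAux L n φn φn1 i x)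
      = phiAux L n φn φn1 (i+1) ((L.d i (i+1) : L.X i →ₗ[A] L.X (i+1)) x) := by
    intro i x
    by_cases h1 : i = n
    · subst h1
      rw [phiAux_self, phiAux_succ]
      exact hcd x
    · by_cases h2 : i = n + 1
      · subst h2
        exact Subsingleton.elim _ _
      · rw [phiAux_other L n _ _ i h1 h2]
        simp only [LinearMap.zero_apply, map_zero]
        by_cases h3 : i + 1 = n
        · subst h3
          rw [phiAux_self]
          exact (hφn_van _ (hdd i x)).symm
        · have h4 : i + 1 ≠ n + 1 := fun hc => h1 (Nat.succ_injective hc)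
          rw [phiAux_other L n _ _ (i+1) h3 h4]
          simp
  have hker : ∀ i, Ssub L n K K' i ≤
      LinearMap.ker (LinearMap.id - phiAux L n φn φn1 i) := by
    intro i x hx
    rw [LinearMap.mem_ker, LinearMap.sub_apply, LinearMap.id_apply, hφ_id i x hx, sub_self]
  -- kernels of the quotient map
  have hkn : LinearMap.ker ((πq L (Ssub L n K K' ) hdS).f n :
      L.X n →ₗ[A] (Lq L (Ssub L n K K') hdS).X n) = K := by
    show LinearMap.ker ((Ssub L n K K' n).mkQ) = K
    rw [Submodule.ker_mkQ, Ssub_self]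
  have hkn1 : LinearMap.ker ((πq L (Ssub L n K K') hdS).f (n+1) :
      L.X (n+1) →ₗ[A] (Lq L (Ssub L n K K') hdS).X (n+1)) = K' := by
    show LinearMap.ker ((Ssub L n K K' (n+1)).mkQ) = K'
    rw [Submodule.ker_mkQ, Ssub_succ]
  refine ⟨Lq L (Ssub L n K K') hdS, πq L (Ssub L n K K') hdS, ?_, ?_, ?_, ?_, ?_, ?_, ?_,
    ?_, ?_, ?_, ?_⟩
  · exact fun i => Submodule.mkQ_surjective _
  · intro i h1 h2
    have hker0 : LinearMap.ker ((Ssub L n K K' i).mkQ) = ⊥ := by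
      rw [Submodule.ker_mkQ, Ssub_other L n K K' i h1 h2]
    exact LinearMap.ker_eq_bot.mp hker0
  · rw [hkn]
    exact ⟨C, hComplK⟩
  · rw [hkn1]
    exact ⟨C', hComplK'⟩
  · rw [hkn]
    exact hfreeK
  · rw [hkn1]
    exact hfreeK'
  · rw [hkn, hkn1]
    exact hmap
  · rw [hkn]
    exact hinjK
  · intro i
    haveI := (hfree i).1
    constructor
    · exact Module.Finite.of_surjective (Ssub L n K K' i).mkQ
        (Submodule.mkQ_surjective _)
    · by_cases h1 : i = n
      · subst h1
        show Module.Free A (L.X i ⧸ Ssub L i K K' i)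
        rw [Ssub_self]
        exact hfreeQM
      · by_cases h2 : i = n + 1
        · subst h2
          show Module.Free A (L.X (n+1) ⧸ Ssub L n K K' (n+1))
          rw [Ssub_succ]
          exact hfreeQN
        · show Module.Free A (L.X i ⧸ Ssub L n K K' i)
          rw [Ssub_other L n K K' i h1 h2]
          exact Module.Free.of_equiv'
            (hfree i).2 (Submodule.quotEquivOfEqBot ⊥ rfl).symm
  · -- QuasiIso
    have hπσf : ∀ i, ((πq L (Ssub L n K K') hdS) ≫ (σq L (Ssub L n K K') hdS
        (phiAux L n φn φn1) hker hφd)).f i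
        = ModuleCat.ofHom (LinearMap.id - phiAux L n φn φn1 i : L.X i →ₗ[A] L.X i) := by
      intro i
      rw [HomologicalComplex.comp_f]
      exact ModuleCat.hom_ext (Submodule.liftQ_mkQ _ _ _)
    have H1 : Homotopy ((πq L (Ssub L n K K') hdS) ≫ (σq L (Ssub L n K K') hdS
        (phiAux L n φn φn1) hker hφd)) (𝟙 L) := {
      hom := hAux L n (-g)
      zero := by
        intro i j hnr
        refine hAux_other L n _ i j (fun hc => hnr ?_)
        rw [hc.1, hc.2]
        rfl
      comm := by
        intro i
        rw [hπσf i]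
        have hnext : dNext i (hAux L n (-g))
            = L.d i (i+1) ≫ hAux L n (-g) (i+1) i :=
          dNext_eq _ (by rfl)
        rw [hnext]
        by_cases h1 : i = n
        · subst h1
          have hprev : prevD i (hAux L i (-g)) = 0 := by
            show hAux L i (-g) i ((ComplexShape.up ℕ).prev i)
              ≫ L.d ((ComplexShape.up ℕ).prev i) i = 0
            rw [hAux_other L i _ i _ (fun hc => Nat.succ_ne_self i hc.1.symm)]
            exact Limits.zero_comp
          rw [hprev, hAux_self]
          refine ModuleCat.hom_ext <| LinearMap.ext fun x => ?_
          show x - phiAux L i φn φn1 i x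
            = (-g) ((L.d i (i+1) : L.X i →ₗ[A] L.X (i+1)) x) + 0 + x
          rw [phiAux_self, LinearMap.neg_apply, hgd x]
          abel
        · by_cases h2 : i = n + 1
          · subst h2
            have hprev : prevD (n+1) (hAux L n (-g))
                = hAux L n (-g) (n+1) n ≫ L.d n (n+1) :=
              prevD_eq _ (by rfl)
            rw [hprev, hAux_self, hAux_other L n _ (n+2) (n+1)
              (fun hc => Nat.succ_ne_self (n+1) hc.1), Limits.comp_zero]
            refine ModuleCat.hom_ext <| LinearMap.ext fun x => ?_
            show x - phiAux L n φn φn1 (n+1) x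
              = 0 + (L.d n (n+1) : L.X n →ₗ[A] L.X (n+1)) ((-g) x) + x
            rw [phiAux_succ, LinearMap.neg_apply, map_neg, hdg x]
            abel
          · have hprev : prevD i (hAux L n (-g)) = 0 := by
              show hAux L n (-g) i ((ComplexShape.up ℕ).prev i)
                ≫ L.d ((ComplexShape.up ℕ).prev i) i = 0
              rw [hAux_other L n _ i _ (fun hc => h2 hc.1)]
              exact Limits.zero_comp
            rw [hprev, hAux_other L n _ (i+1) i
              (fun hc => h1 hc.2), Limits.comp_zero]
            refine ModuleCat.hom_ext <| LinearMap.ext fun x => ?_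
            show x - phiAux L n φn φn1 i x = 0 + 0 + x
            rw [phiAux_other L n _ _ i h1 h2]
            simp
    }
    have H2 : ((σq L (Ssub L n K K') hdS (phiAux L n φn φn1) hker hφd)
        ≫ (πq L (Ssub L n K K') hdS)) = 𝟙 (Lq L (Ssub L n K K') hdS) := by
      refine HomologicalComplex.hom_ext _ _ fun i => ?_
      rw [HomologicalComplex.comp_f, HomologicalComplex.id_f]
      refine ModuleCat.hom_ext <| LinearMap.ext fun x => ?_
      obtain ⟨y, rfl⟩ := Submodule.mkQ_surjective _ x
      show (Ssub L n K K' i).mkQ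
          (((Ssub L n K K' i).liftQ _ (hker i)) (Submodule.Quotient.mk y))
        = Submodule.Quotient.mk y
      rw [Submodule.liftQ_apply, LinearMap.sub_apply, LinearMap.id_apply, map_sub,
        Submodule.mkQ_apply, Submodule.mkQ_apply,
        (Submodule.Quotient.mk_eq_zero _).mpr (hφ_mem i y), sub_zero]
    obtain ⟨E, hE⟩ : ∃ E : HomotopyEquiv L (Lq L (Ssub L n K K') hdS),
        E.hom = πq L (Ssub L n K K') hdS :=
      ⟨⟨πq L (Ssub L n K K') hdS, σq L (Ssub L n K K') hdS (phiAux L n φn φn1) hker hφd,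
        H1, Homotopy.ofEq H2⟩, rfl⟩
    rw [← hE]
    infer_instance
  · -- range condition
    rw [Lq_d]
    rintro z ⟨w, rfl⟩
    obtain ⟨y, rfl⟩ := Submodule.mkQ_surjective _ w
    show ((Ssub L n K K' n).mapQ (Ssub L n K K' (n+1)) (L.d n (n+1)).hom (hdS n))
        ((Ssub L n K K' n).mkQ y)
      ∈ (IsLocalRing.maximalIdeal A) •
        (⊤ : Submodule A (L.X (n+1) ⧸ Ssub L n K K' (n+1)))
    rw [Submodule.mkQ_apply, Submodule.mapQ_apply]
    have hy : (L.d n (n+1) : L.X n →ₗ[A] L.X (n+1)) y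
        ∈ K' ⊔ (IsLocalRing.maximalIdeal A) • ⊤ :=
      hrange (LinearMap.mem_range_self _ y)
    obtain ⟨k, hk, t, ht, hsum⟩ := Submodule.mem_sup.mp hy
    rw [← hsum, Submodule.Quotient.mk_add]
    have hk0 : (Submodule.Quotient.mk k : L.X (n+1) ⧸ Ssub L n K K' (n+1)) = 0 := by
      rw [Submodule.Quotient.mk_eq_zero, Ssub_succ]
      exact hk
    rw [hk0, zero_add]
    have : (Submodule.Quotient.mk t : L.X (n+1) ⧸ Ssub L n K K' (n+1))
        ∈ Submodule.map (Ssub L n K K' (n+1)).mkQ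
          ((IsLocalRing.maximalIdeal A) • (⊤ : Submodule A (L.X (n+1)))) :=
      Submodule.mem_map_of_mem ht
    rw [Submodule.map_smul''] at this
    exact Submodule.smul_mono (le_refl (IsLocalRing.maximalIdeal A))
      (le_top : Submodule.map (Ssub L n K K' (n+1)).mkQ ⊤ ≤ ⊤) this
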